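/- Assume N₊ ≥ 1 and N₋ = 0 (so Q = 0 and dc̃₂ = 0). Then (i) an element ω ∈ Ω satisfies dω = 0 if and only if ω ∼ (a₀₀ + c̃₂a₀₁) + ψ₁(a₁₀ + c̃₂a₁₁) for some polynomials a₀₀, a₀₁, a₁₀, a₁₁ lying in the subring ℂ[ψ₂,…,ψ_{N₊}] of R (complex constants when N₊ = 1); and (ii) (a₀₀ + c̃₂a₀₁) + ψ₁(a₁₀ + c̃₂a₁₁) ∼ 0 for such coefficients if and only if a₀₀ = a₀₁ = a₁₀ = a₁₁ = 0. -/

import Mathlib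

/-!
D = 2, signature (1,1) supersymmetry algebra cohomology.
`R2 Np Nm = ℂ[ψ₁,…,ψ_{N₊}, χ₁,…,χ_{N₋}]`, `Om2` is the free module with basis
`{1, c̃₁, c̃₂, c̃₁c̃₂}`, and `d2` is the differential with `dc̃₁ = P`, `dc̃₂ = Q`.
-/

open MvPolynomial

noncomputable section

/-- The polynomial ring `ℂ[ψ₁,…,ψ_{N₊}, χ₁,…,χ_{N₋}]`; `Sum.inl i ↦ ψᵢ`, `Sum.inr i ↦ χᵢ`. -/
abbrev R2 (Np Nm : ℕ) : Type := MvPolynomial (Fin Np ⊕ Fin Nm) ℂ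

/-- `Ω`: free `R2`-module with basis `{1, c̃₁, c̃₂, c̃₁c̃₂}` (components 0,1,2,3). -/
abbrev Om2 (Np Nm : ℕ) : Type := Fin 4 → R2 Np Nm

/-- The ghost `ψᵢ`. -/
def ψ {Np Nm : ℕ} (i : Fin Np) : R2 Np Nm := X (Sum.inl i)

/-- The ghost `χᵢ`. -/
def χ {Np Nm : ℕ} (i : Fin Nm) : R2 Np Nm := X (Sum.inr i)

/-- `P = Σ ψᵢ²`. -/
def Pp (Np Nm : ℕ) : R2 Np Nm := ∑ i, ψ i ^ 2

/-- `Q = Σ χᵢ²`. -/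
def Qq (Np Nm : ℕ) : R2 Np Nm := ∑ i, χ i ^ 2

/-- The differential `d(ω₀ + c̃₁ω₁ + c̃₂ω₂ + c̃₁c̃₂ω₃) = Pω₁ + Qω₂ + (Pc̃₂ − Qc̃₁)ω₃`. -/
def d2 {Np Nm : ℕ} (ω : Om2 Np Nm) : Om2 Np Nm :=
  ![Pp Np Nm * ω 1 + Qq Np Nm * ω 2, -(Qq Np Nm * ω 3), Pp Np Nm * ω 3, 0]

/-- Embedding of `R` into `Ω` (coefficient of the basis element `1`). -/
def ofR {Np Nm : ℕ} (r : R2 Np Nm) : Om2 Np Nm := ![r, 0, 0, 0]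

/-- `ω ∼ ω'` iff `ω − ω' = dρ` for some `ρ`. -/
def Equiv2 {Np Nm : ℕ} (ω ω' : Om2 Np Nm) : Prop := ∃ ρ, ω - ω' = d2 ρ


/-- The subring `ℂ[ψ₂,…,ψ_{N₊}]` of `R2 Np 0`. -/
def coefRingP (Np : ℕ) (hp : 0 < Np) : Subalgebra ℂ (R2 Np 0) :=
  MvPolynomial.supported ℂ {v : Fin Np ⊕ Fin 0 | v ≠ Sum.inl ⟨0, hp⟩}

section AuxStmt1
open Polynomial
variable {Np : ℕ}

def Φm (Np : ℕ) (hp : 0 < Np) :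
    R2 Np 0 ≃ₐ[ℂ] Polynomial (MvPolynomial {v : Fin Np ⊕ Fin 0 // v ≠ Sum.inl ⟨0, hp⟩} ℂ) :=
  (MvPolynomial.renameEquiv ℂ (Equiv.optionSubtypeNe (Sum.inl ⟨0, hp⟩)).symm).trans
    (MvPolynomial.optionEquivLeft ℂ _)

lemma Φm_X0 (hp : 0 < Np) : Φm Np hp (ψ ⟨0, hp⟩) = Polynomial.X := by
  simp [Φm, ψ, Equiv.optionSubtypeNe_symm_self, optionEquivLeft_X_none]

lemma Φm_rename (hp : 0 < Np) (t : MvPolynomial {v : Fin Np ⊕ Fin 0 // v ≠ Sum.inl ⟨0, hp⟩} ℂ) :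
    Φm Np hp (rename Subtype.val t) = Polynomial.C t := by
  have h : ((Φm Np hp).toAlgHom.comp (rename Subtype.val)) =
      (Polynomial.CAlgHom (R := ℂ)) := by
    apply MvPolynomial.algHom_ext
    intro u
    simp [Φm, Equiv.optionSubtypeNe_symm_of_ne u.2, Polynomial.CAlgHom]
  exact congrArg (fun f => f t) h

lemma mem_coef_iff (hp : 0 < Np) (a : R2 Np 0) :
    a ∈ coefRingP Np hp ↔ ∃ t, Φm Np hp a = Polynomial.C t := by
  constructor
  · intro ha
    rw [coefRingP, supported_eq_range_rename, AlgHom.mem_range] at ha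
    obtain ⟨t, rfl⟩ := ha
    exact ⟨t, Φm_rename hp t⟩
  · rintro ⟨t, h⟩
    have : a = rename Subtype.val t := by
      apply (Φm Np hp).injective
      rw [h, Φm_rename]
    rw [coefRingP, supported_eq_range_rename, AlgHom.mem_range]
    exact ⟨t, this.symm⟩

lemma Φm_P (hp : 0 < Np) : ∃ s, Φm Np hp (Pp Np 0) = Polynomial.X ^ 2 + Polynomial.C s := by
  have hsplit : Pp Np 0 = ψ ⟨0, hp⟩ ^ 2 + ∑ i ∈ Finset.univ.erase ⟨0, hp⟩, ψ i ^ 2 := by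
    rw [Pp]
    exact (Finset.add_sum_erase _ (fun i => ψ i ^ 2) (Finset.mem_univ _)).symm
  have hmem : (∑ i ∈ Finset.univ.erase ⟨0, hp⟩, (ψ i : R2 Np 0) ^ 2) ∈ coefRingP Np hp := by
    apply Subalgebra.sum_mem
    intro i hi
    apply pow_mem
    show MvPolynomial.X (Sum.inl i) ∈ supported ℂ _
    rw [X_mem_supported (R := ℂ)]
    simp only [Set.mem_setOf_eq, ne_eq, Sum.inl.injEq]
    exact Finset.ne_of_mem_erase hi
  obtain ⟨s, hs⟩ := (mem_coef_iff hp _).mp hmem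
  refine ⟨s, ?_⟩
  rw [hsplit, map_add, map_pow, Φm_X0, hs]

lemma pm_monic {A : Type*} [CommRing A] [Nontrivial A] (s : A) :
    (Polynomial.X ^ 2 + Polynomial.C s).Monic :=
  monic_X_pow_add (by simpa using (degree_C_le (a := s)).trans_lt (by norm_num))

lemma pm_natDegree {A : Type*} [CommRing A] [Nontrivial A] (s : A) :
    (Polynomial.X ^ 2 + Polynomial.C s).natDegree = 2 := natDegree_X_pow_add_C

lemma reduce (hp : 0 < Np) (r : R2 Np 0) :
    ∃ a ∈ coefRingP Np hp, ∃ b ∈ coefRingP Np hp, ∃ q,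
      r = a + ψ ⟨0, hp⟩ * b + Pp Np 0 * q := by
  obtain ⟨s, hs⟩ := Φm_P hp
  set pm := Polynomial.X ^ 2 + Polynomial.C s with hpm
  have hmon : pm.Monic := pm_monic s
  have hone : pm ≠ 1 := fun h => by
    have := congrArg Polynomial.natDegree h
    rw [pm_natDegree] at this; simp at this
  set f := Φm Np hp r with hf
  set rem := f %ₘ pm with hremdef
  set qd := f /ₘ pm with hqd
  have hdiv : f = rem + pm * qd := (modByMonic_add_div f pm).symm
  have hdeg : rem.natDegree ≤ 1 := by
    have := natDegree_modByMonic_lt f hmon hone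
    rw [pm_natDegree, ← hremdef] at this; omega
  have hrem := eq_X_add_C_of_natDegree_le_one hdeg
  refine ⟨(Φm Np hp).symm (Polynomial.C (rem.coeff 0)),
    (mem_coef_iff hp _).mpr ⟨_, (Φm Np hp).apply_symm_apply _⟩,
    (Φm Np hp).symm (Polynomial.C (rem.coeff 1)),
    (mem_coef_iff hp _).mpr ⟨_, (Φm Np hp).apply_symm_apply _⟩,
    (Φm Np hp).symm qd, ?_⟩
  apply (Φm Np hp).injective
  simp only [map_add, map_mul, Φm_X0, (Φm Np hp).apply_symm_apply, hs, ← hpm]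
  conv_lhs => rw [← hf]
  rw [hdiv]
  nth_rewrite 1 [hrem]
  ring

lemma unique_lem (hp : 0 < Np) {a b : R2 Np 0} (ha : a ∈ coefRingP Np hp)
    (hb : b ∈ coefRingP Np hp) {q : R2 Np 0}
    (h : a + ψ ⟨0, hp⟩ * b = Pp Np 0 * q) : a = 0 ∧ b = 0 := by
  obtain ⟨ta, hta⟩ := (mem_coef_iff hp a).mp ha
  obtain ⟨tb, htb⟩ := (mem_coef_iff hp b).mp hb
  obtain ⟨s, hs⟩ := Φm_P hp
  set pm := Polynomial.X ^ 2 + Polynomial.C s with hpm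
  have h2 : Polynomial.C ta + Polynomial.X * Polynomial.C tb = pm * Φm Np hp q := by
    have := congrArg (Φm Np hp) h
    simpa only [map_add, map_mul, Φm_X0, hta, htb, hs] using this
  have hq0 : Φm Np hp q = 0 := by
    by_contra hq
    have hne : pm ≠ 0 := (pm_monic s).ne_zero
    have hdm : (pm * Φm Np hp q).natDegree = 2 + (Φm Np hp q).natDegree := by
      rw [Polynomial.natDegree_mul hne hq, pm_natDegree]
    have hle : (Polynomial.C ta + Polynomial.X * Polynomial.C tb).natDegree ≤ 1 := by
      refine (Polynomial.natDegree_add_le _ _).trans ?_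
      simp only [Polynomial.natDegree_C, Nat.zero_le, max_le_iff, true_and]
      exact (Polynomial.natDegree_mul_le).trans (by simp)
    rw [h2, hdm] at hle
    omega
  rw [hq0, mul_zero] at h2
  have h0 : ta = 0 := by
    have := congrArg (fun g => Polynomial.coeff g 0) h2
    simpa using this
  have h1 : tb = 0 := by
    have := congrArg (fun g => Polynomial.coeff g 1) h2
    simpa [Polynomial.coeff_X_mul] using this
  constructor
  · apply (Φm Np hp).injective; rw [hta, h0, map_zero, map_zero]
  · apply (Φm Np hp).injective; rw [htb, h1, map_zero, map_zero]

lemma Pp_ne_zero (hp : 0 < Np) : Pp Np 0 ≠ 0 := by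
  intro h
  obtain ⟨s, hs⟩ := Φm_P hp
  rw [h, map_zero] at hs
  exact (pm_monic s).ne_zero hs.symm

end AuxStmt1

/-- for `N₊ ≥ 1`, `N₋ = 0` (so `Q = 0`, `dc̃₂ = 0`),
(i) `dω = 0` iff `ω ∼ (a₀₀ + c̃₂a₀₁) + ψ₁(a₁₀ + c̃₂a₁₁)` with coefficients in
`ℂ[ψ₂,…,ψ_{N₊}]`; (ii) such a combination is `∼ 0` iff all coefficients vanish. -/
theorem stmt1 (Np : ℕ) (hp : 0 < Np) :
    (∀ ω : Om2 Np 0, d2 ω = 0 ↔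
      ∃ a00 ∈ coefRingP Np hp, ∃ a01 ∈ coefRingP Np hp,
      ∃ a10 ∈ coefRingP Np hp, ∃ a11 ∈ coefRingP Np hp,
        Equiv2 ω ![a00 + ψ ⟨0, hp⟩ * a10, 0, a01 + ψ ⟨0, hp⟩ * a11, 0])
    ∧
    (∀ a00 a01 a10 a11 : R2 Np 0,
      a00 ∈ coefRingP Np hp → a01 ∈ coefRingP Np hp →
      a10 ∈ coefRingP Np hp → a11 ∈ coefRingP Np hp →
      (Equiv2 ![a00 + ψ ⟨0, hp⟩ * a10, 0, a01 + ψ ⟨0, hp⟩ * a11, 0] 0 ↔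
        a00 = 0 ∧ a01 = 0 ∧ a10 = 0 ∧ a11 = 0)) := by
  have hQ : Qq Np 0 = 0 := by simp [Qq]
  constructor
  · intro ω
    constructor
    · intro hd
      have h1 : ω 1 = 0 := by
        have h := congrFun hd 0
        simp only [d2, Matrix.cons_val_zero, hQ, zero_mul, add_zero, Pi.zero_apply,
          mul_eq_zero] at h
        exact h.resolve_left (Pp_ne_zero hp)
      have h3 : ω 3 = 0 := by
        have h := congrFun hd 2
        simp only [d2, Matrix.cons_val_two, Matrix.cons_val_succ, Matrix.cons_val_zero,
          Matrix.cons_val_one, Matrix.head_cons, Matrix.vecHead, Matrix.vecTail, Pi.zero_apply,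
          Function.comp, mul_eq_zero] at h
        exact h.resolve_left (Pp_ne_zero hp)
      obtain ⟨a00, ha00, a10, ha10, q0, h0⟩ := reduce hp (ω 0)
      obtain ⟨a01, ha01, a11, ha11, q2, h2⟩ := reduce hp (ω 2)
      refine ⟨a00, ha00, a01, ha01, a10, ha10, a11, ha11, ![0, q0, 0, q2], ?_⟩
      funext i
      fin_cases i <;>
        simp [d2, hQ, h1, h3, Matrix.vecHead, Matrix.vecTail, Matrix.cons_val_succ] <;>
        first | linear_combination h0 | linear_combination h2
    · rintro ⟨a00, ha00, a01, ha01, a10, ha10, a11, ha11, ρ, hρ⟩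
      have h1 : ω 1 = 0 := by
        have h := congrFun hρ 1
        simpa [d2, hQ, Matrix.vecHead, Matrix.vecTail, Matrix.cons_val_succ] using h
      have h3 : ω 3 = 0 := by
        have h := congrFun hρ 3
        simpa [d2, Matrix.vecHead, Matrix.vecTail, Matrix.cons_val_succ] using h
      funext i
      fin_cases i <;> simp [d2, hQ, h1, h3, Matrix.vecHead, Matrix.vecTail, Matrix.cons_val_succ]
  · intro a00 a01 a10 a11 ha00 ha01 ha10 ha11
    constructor
    · rintro ⟨ρ, hρ⟩
      have h0 : a00 + ψ ⟨0, hp⟩ * a10 = Pp Np 0 * ρ 1 := by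
        have h := congrFun hρ 0
        simpa [d2, hQ, Matrix.vecHead, Matrix.vecTail, Matrix.cons_val_succ] using h
      have h2 : a01 + ψ ⟨0, hp⟩ * a11 = Pp Np 0 * ρ 3 := by
        have h := congrFun hρ 2
        simpa [d2, hQ, Matrix.vecHead, Matrix.vecTail, Matrix.cons_val_succ] using h
      obtain ⟨e1, e2⟩ := unique_lem hp ha00 ha10 h0
      obtain ⟨e3, e4⟩ := unique_lem hp ha01 ha11 h2
      exact ⟨e1, e3, e2, e4⟩
    · rintro ⟨rfl, rfl, rfl, rfl⟩
      refine ⟨0, ?_⟩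
      funext i
      fin_cases i <;> simp [d2, Matrix.vecHead, Matrix.vecTail, Matrix.cons_val_succ]
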